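/- Let X be a normed space, Y a Banach space, A = {x, y} a two-point subset of X, and u : A → Y a 1-Lipschitz map with x ≠ y. For any z ∈ X, setting t = min{1, ‖z − y‖/‖x − y‖} and u(z) = t·u(x) + (1−t)·u(y) extends u to a 1-Lipschitz map on {x, y, z}. -/

import Mathlib

/-- Extension of a `1`-Lipschitz map from a two-point set `{x, y}` to a third point `z`:
with `t = min 1 (‖z − y‖ / ‖x − y‖)` and `u z := t • u x + (1 − t) • u y`, the resulting
map on `{x, y, z}` is `1`-Lipschitz. -/
theorem two_point_lipschitz_extension
    {X : Type*} [NormedAddCommGroup X] [NormedSpace ℝ X]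
    {Y : Type*} [NormedAddCommGroup Y] [NormedSpace ℝ Y] [CompleteSpace Y]
    (x y z : X) (hxy : x ≠ y) (ux uy : Y) (hu : ‖ux - uy‖ ≤ ‖x - y‖) :
    let t : ℝ := min 1 (‖z - y‖ / ‖x - y‖)
    let uz : Y := t • ux + (1 - t) • uy
    ‖uz - ux‖ ≤ ‖z - x‖ ∧ ‖uz - uy‖ ≤ ‖z - y‖ := by
  intro t uz
  have hd : (0:ℝ) < ‖x - y‖ := by
    simpa [sub_eq_zero] using (norm_pos_iff.mpr (sub_ne_zero.mpr hxy))
  have ht0 : 0 ≤ t := le_min zero_le_one (div_nonneg (norm_nonneg _) hd.le)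
  have ht1 : t ≤ 1 := min_le_left _ _
  have ht2 : t ≤ ‖z - y‖ / ‖x - y‖ := min_le_right _ _
  have h1 : uz - ux = (1 - t) • (uy - ux) := by
    simp only [uz]
    module
  have h2 : uz - uy = t • (ux - uy) := by
    simp only [uz]
    module
  constructor
  · rw [h1, norm_smul, Real.norm_eq_abs, abs_of_nonneg (by linarith)]
    have hle : (1 - t) * ‖uy - ux‖ ≤ (1 - t) * ‖x - y‖ := by
      rw [norm_sub_rev]
      exact mul_le_mul_of_nonneg_left hu (by linarith)
    refine hle.trans ?_
    rcases min_cases 1 (‖z - y‖ / ‖x - y‖) with ⟨h, _⟩ | ⟨h, hge⟩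
    · simp [t, h, norm_nonneg]
    · have htval : t = ‖z - y‖ / ‖x - y‖ := h
      have : (1 - t) * ‖x - y‖ = ‖x - y‖ - ‖z - y‖ := by
        rw [htval, sub_mul, div_mul_cancel₀ _ hd.ne', one_mul]
      rw [this]
      have h3 : ‖x - y‖ ≤ ‖x - z‖ + ‖z - y‖ := by
        calc ‖x - y‖ = ‖(x - z) + (z - y)‖ := by rw [sub_add_sub_cancel]
          _ ≤ ‖x - z‖ + ‖z - y‖ := norm_add_le _ _
      rw [norm_sub_rev z x]
      linarith
  · rw [h2, norm_smul, Real.norm_eq_abs, abs_of_nonneg ht0]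
    calc t * ‖ux - uy‖ ≤ t * ‖x - y‖ := mul_le_mul_of_nonneg_left hu ht0
      _ ≤ (‖z - y‖ / ‖x - y‖) * ‖x - y‖ := mul_le_mul_of_nonneg_right ht2 hd.le
      _ = ‖z - y‖ := div_mul_cancel₀ _ hd.ne'
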